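/- arXiv:1601.06852 — 3 statements merged into one kernel-verified Lean document; each statement's English description precedes it below -/
import Mathlib

section
/- Let m and n be integers with 2 ≤ 2m < n+1. There exists a constant c(n,m) > 0 depending only on n and m such that for every f ∈ L¹(ℝ^n) and every λ > 0, the Lebesgue measure of the set {X ∈ ℝ^{n+1}_+ : |(P_m * f)(X)| > λ} is at most c(n,m) λ^{−(n+1)/n} ‖f‖_{L¹(ℝ^n)}^{(n+1)/n}; that is, P_m * f belongs to weak-L^{(n+1)/n}(ℝ^{n+1}_+). -/
open MeasureTheory Filter Asymptotics
open scoped Topology ENNReal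

noncomputable section

/-- Points of `ℝ^{n+1}` are written `X = (x, t)` with `x ∈ ℝ^n` and `t ∈ ℝ`. -/
abbrev Pt (n : ℕ) := (EuclideanSpace ℝ (Fin n)) × ℝ

/-- The Laplacian on `ℝ^{n+1} = ℝ^n × ℝ`, computed as the sum of the second partial
derivatives in the coordinate directions. -/
def lap (n : ℕ) (f : Pt n → ℝ) : Pt n → ℝ := fun X =>
  (∑ i : Fin n,
      fderiv ℝ (fun Y => fderiv ℝ f Y ((EuclideanSpace.single i (1:ℝ)), (0:ℝ))) X
        ((EuclideanSpace.single i (1:ℝ)), (0:ℝ)))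
    + fderiv ℝ (fun Y => fderiv ℝ f Y ((0 : EuclideanSpace ℝ (Fin n)), (1:ℝ))) X
        ((0 : EuclideanSpace ℝ (Fin n)), (1:ℝ))

/-- `lapIter n m f = Δ^m f`. -/
def lapIter (n m : ℕ) (f : Pt n → ℝ) : Pt n → ℝ := (lap n)^[m] f

/-- `∂_t f`, the partial derivative in the last (`t`) variable. -/
def dt (n : ℕ) (f : Pt n → ℝ) (X : Pt n) : ℝ :=
  fderiv ℝ f X ((0 : EuclideanSpace ℝ (Fin n)), (1:ℝ))

/-- The Poisson-type kernel `P_m(x,t) = β(n,m) t^{2m-1} (|x|² + t²)^{-(n+2m-1)/2}`, with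
`β(n,m) = π^{-n/2} Γ((n+2m-1)/2) / Γ(m - 1/2)`. -/
def Pker (n m : ℕ) (x : EuclideanSpace ℝ (Fin n)) (t : ℝ) : ℝ :=
  (Real.pi ^ (-(n:ℝ)/2) * Real.Gamma (((n:ℝ) + 2*m - 1)/2) / Real.Gamma ((m:ℝ) - 1/2)) *
    t ^ (2*m - 1) * (‖x‖^2 + t^2) ^ (-(((n:ℝ) + 2*m - 1)/2))

/-- The convolution `(P_m * f)(x,t) = ∫_{ℝ^n} P_m(x-y, t) f(y) dy`. -/
def Pconv (n m : ℕ) (f : EuclideanSpace ℝ (Fin n) → ℝ) (X : Pt n) : ℝ :=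
  ∫ y : EuclideanSpace ℝ (Fin n), Pker n m (X.1 - y) X.2 * f y

def Bc (n m : ℕ) : ℝ :=
  Real.pi ^ (-(n:ℝ)/2) * Real.Gamma (((n:ℝ) + 2*m - 1)/2) / Real.Gamma ((m:ℝ) - 1/2)

lemma Pker_eq (n m : ℕ) (x : EuclideanSpace ℝ (Fin n)) (t : ℝ) :
    Pker n m x t = Bc n m * t ^ (2*m - 1) * (‖x‖^2 + t^2) ^ (-(((n:ℝ) + 2*m - 1)/2)) := rfl

lemma Bc_pos (n m : ℕ) (hm : 1 ≤ m) : 0 < Bc n m := by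
  have h1 : (0:ℝ) < Real.pi ^ (-(n:ℝ)/2) := Real.rpow_pos_of_pos Real.pi_pos _
  have h2 : (0:ℝ) < Real.Gamma (((n:ℝ) + 2*m - 1)/2) := by
    apply Real.Gamma_pos_of_pos
    have : (1:ℝ) ≤ (m:ℝ) := by exact_mod_cast hm
    have : (0:ℝ) ≤ (n:ℝ) := Nat.cast_nonneg n
    nlinarith [Nat.cast_nonneg (α := ℝ) n, (by exact_mod_cast hm : (1:ℝ) ≤ (m:ℝ))]
  have h3 : (0:ℝ) < Real.Gamma ((m:ℝ) - 1/2) := by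
    apply Real.Gamma_pos_of_pos
    have : (1:ℝ) ≤ (m:ℝ) := by exact_mod_cast hm
    linarith
  exact div_pos (mul_pos h1 h2) h3

/-- `t^(2m-1) * (t²)^(-(n+2m-1)/2) = t^(-n)` for `t > 0`. -/
lemma tpow_key (n m : ℕ) (hm : 1 ≤ m) {t : ℝ} (ht : 0 < t) :
    t ^ (2*m - 1) * ((t^2 : ℝ)) ^ (-(((n:ℝ) + 2*m - 1)/2)) = t ^ (-(n:ℝ)) := by
  have h1 : (t : ℝ) ^ (2*m - 1) = t ^ (((2*m - 1 : ℕ) : ℝ)) := (Real.rpow_natCast t _).symm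
  have h2 : ((t^2 : ℝ)) ^ (-(((n:ℝ) + 2*m - 1)/2))
      = t ^ ((2:ℝ) * (-(((n:ℝ) + 2*m - 1)/2))) := by
    rw [Real.rpow_mul ht.le, Real.rpow_two]
  rw [h1, h2, ← Real.rpow_add ht]
  congr 1
  have hcast : ((2*m - 1 : ℕ) : ℝ) = 2*(m:ℝ) - 1 := by
    have h : 1 ≤ 2*m := by omega
    push_cast [Nat.cast_sub h]
    ring
  rw [hcast]; ring

lemma Pker_nonneg (n m : ℕ) (hm : 1 ≤ m) (x : EuclideanSpace ℝ (Fin n)) {t : ℝ} (ht : 0 < t) :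
    0 ≤ Pker n m x t := by
  rw [Pker_eq]
  have := Bc_pos n m hm
  have h2 : (0:ℝ) ≤ (‖x‖^2 + t^2) := by positivity
  positivity

lemma Pker_le (n m : ℕ) (hm : 1 ≤ m) (x : EuclideanSpace ℝ (Fin n)) {t : ℝ} (ht : 0 < t) :
    Pker n m x t ≤ Bc n m * t ^ (-(n:ℝ)) := by
  have hB := Bc_pos n m hm
  have hbase : (0:ℝ) < t^2 := by positivity
  have hmono : (‖x‖^2 + t^2) ^ (-(((n:ℝ) + 2*m - 1)/2)) ≤ ((t^2:ℝ)) ^ (-(((n:ℝ) + 2*m - 1)/2)) := by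
    have hm' : (1:ℝ) ≤ (m:ℝ) := by exact_mod_cast hm
    have hn' : (0:ℝ) ≤ (n:ℝ) := Nat.cast_nonneg n
    have he : (0:ℝ) ≤ ((n:ℝ) + 2*m - 1)/2 := by linarith
    have hxt : (0:ℝ) ≤ ‖x‖^2 + t^2 := by positivity
    rw [Real.rpow_neg hxt, Real.rpow_neg hbase.le]
    have h1 : ((t^2:ℝ)) ^ (((n:ℝ) + 2*m - 1)/2) ≤ (‖x‖^2 + t^2) ^ (((n:ℝ) + 2*m - 1)/2) :=
      Real.rpow_le_rpow hbase.le (by nlinarith [sq_nonneg ‖x‖]) he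
    exact inv_anti₀ (Real.rpow_pos_of_pos hbase _) h1
  calc Pker n m x t ≤ Bc n m * t ^ (2*m-1) * ((t^2:ℝ)) ^ (-(((n:ℝ) + 2*m - 1)/2)) := by
        rw [Pker_eq]
        exact mul_le_mul_of_nonneg_left hmono (by positivity)
    _ = Bc n m * t ^ (-(n:ℝ)) := by
        rw [mul_assoc, tpow_key n m hm ht]

/-- Scaling identity. -/
lemma Pker_smul (n m : ℕ) (hm : 1 ≤ m) (u : EuclideanSpace ℝ (Fin n)) {t : ℝ} (ht : 0 < t) :
    Pker n m (t • u) t = t ^ (-(n:ℝ)) * Pker n m u 1 := by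
  have hnorm : ‖t • u‖ = t * ‖u‖ := by
    rw [norm_smul, Real.norm_eq_abs, abs_of_pos ht]
  have hsplit : (‖t • u‖^2 + t^2 : ℝ) = t^2 * (‖u‖^2 + 1) := by rw [hnorm]; ring
  rw [Pker_eq, Pker_eq, hsplit,
    Real.mul_rpow (by positivity) (by positivity)]
  have := tpow_key n m hm ht
  calc Bc n m * t ^ (2*m-1) * (((t^2:ℝ)) ^ (-(((n:ℝ) + 2*m - 1)/2)) *
        ((‖u‖^2 + 1:ℝ)) ^ (-(((n:ℝ) + 2*m - 1)/2)))
      = (t ^ (2*m-1) * ((t^2:ℝ)) ^ (-(((n:ℝ) + 2*m - 1)/2))) *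
        (Bc n m * ((‖u‖^2 + 1:ℝ)) ^ (-(((n:ℝ) + 2*m - 1)/2))) := by ring
    _ = t ^ (-(n:ℝ)) * (Bc n m * (1:ℝ)^(2*m-1) * ((‖u‖^2 + 1^2:ℝ)) ^ (-(((n:ℝ) + 2*m - 1)/2))) := by
        rw [this]; norm_num

lemma Pker_measurable (n m : ℕ) :
    Measurable (fun p : Pt n × (EuclideanSpace ℝ (Fin n)) => Pker n m (p.1.1 - p.2) p.1.2) := by
  unfold Pker
  fun_prop

lemma Pker_measurable1 (n m : ℕ) (t : ℝ) :
    Measurable (fun x : EuclideanSpace ℝ (Fin n) => Pker n m x t) := by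
  unfold Pker
  fun_prop

/-- Pointwise bound on the convolution. -/
lemma Pconv_le (n m : ℕ) (hm : 1 ≤ m) {f : EuclideanSpace ℝ (Fin n) → ℝ}
    (hf : Integrable f) (X : Pt n) (ht : 0 < X.2) :
    |Pconv n m f X| ≤ Bc n m * X.2 ^ (-(n:ℝ)) * ∫ y, |f y| := by
  have hC : 0 ≤ Bc n m * X.2 ^ (-(n:ℝ)) := by
    have := Bc_pos n m hm
    positivity
  have h1 : |Pconv n m f X| ≤ ∫ y, ‖Pker n m (X.1 - y) X.2 * f y‖ := by
    rw [← Real.norm_eq_abs]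
    exact norm_integral_le_integral_norm _
  have h2 : (∫ y, ‖Pker n m (X.1 - y) X.2 * f y‖) ≤ ∫ y, (Bc n m * X.2 ^ (-(n:ℝ))) * |f y| := by
    apply integral_mono_of_nonneg
    · exact Filter.Eventually.of_forall fun y => norm_nonneg _
    · simpa [Real.norm_eq_abs] using (hf.norm.const_mul (Bc n m * X.2 ^ (-(n:ℝ))))
    · apply Filter.Eventually.of_forall
      intro y
      dsimp only
      rw [norm_mul, Real.norm_eq_abs, Real.norm_eq_abs,
        abs_of_nonneg (Pker_nonneg n m hm _ ht)]
      exact mul_le_mul_of_nonneg_right (Pker_le n m hm _ ht) (abs_nonneg _)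
  calc |Pconv n m f X| ≤ ∫ y, (Bc n m * X.2 ^ (-(n:ℝ))) * |f y| := h1.trans h2
    _ = Bc n m * X.2 ^ (-(n:ℝ)) * ∫ y, |f y| := integral_const_mul _ _

/-- `q t`: the `x`-integral of the kernel. -/
def qk (n m : ℕ) (t : ℝ) : ℝ≥0∞ := ∫⁻ x : EuclideanSpace ℝ (Fin n), ‖Pker n m x t‖₊

lemma qk_eq (n m : ℕ) (hm : 1 ≤ m) {t : ℝ} (ht : 0 < t) : qk n m t = qk n m 1 := by
  classical
  set μ : Measure (EuclideanSpace ℝ (Fin n)) := volume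
  have hg : Measurable (fun x : EuclideanSpace ℝ (Fin n) => (‖Pker n m x t‖₊ : ℝ≥0∞)) :=
    (Pker_measurable1 n m t).nnnorm.coe_nnreal_ennreal
  have hmap : Measure.map (fun x : EuclideanSpace ℝ (Fin n) => t • x) μ
      = ENNReal.ofReal (|(t ^ Module.finrank ℝ (EuclideanSpace ℝ (Fin n)))⁻¹|) • μ :=
    Measure.map_addHaar_smul μ ht.ne'
  have hfr : Module.finrank ℝ (EuclideanSpace ℝ (Fin n)) = n := finrank_euclideanSpace_fin
  have htn : (0:ℝ) < t ^ n := pow_pos ht n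
  have key : ∫⁻ x, (‖Pker n m (t • x) t‖₊ : ℝ≥0∞) ∂μ
      = ENNReal.ofReal ((t ^ n)⁻¹) * qk n m t := by
    rw [← lintegral_map hg (measurable_const_smul t), hmap, hfr, lintegral_smul_measure,
      abs_of_pos (by positivity)]
    rfl
  have key2 : ∫⁻ x, (‖Pker n m (t • x) t‖₊ : ℝ≥0∞) ∂μ
      = ENNReal.ofReal ((t ^ n)⁻¹) * qk n m 1 := by
    have hptw : ∀ x, (‖Pker n m (t • x) t‖₊ : ℝ≥0∞)
        = ENNReal.ofReal ((t ^ n)⁻¹) * (‖Pker n m x 1‖₊ : ℝ≥0∞) := by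
      intro x
      rw [Pker_smul n m hm x ht, ← Real.enorm_eq_ofReal (by positivity : (0:ℝ) ≤ (t^n)⁻¹), enorm_eq_nnnorm]
      have : t ^ (-(n:ℝ)) = (t ^ n)⁻¹ := by
        rw [Real.rpow_neg ht.le, Real.rpow_natCast]
      rw [this, nnnorm_mul, ENNReal.coe_mul]
    calc ∫⁻ x, (‖Pker n m (t • x) t‖₊ : ℝ≥0∞) ∂μ
        = ∫⁻ x, ENNReal.ofReal ((t ^ n)⁻¹) * (‖Pker n m x 1‖₊ : ℝ≥0∞) ∂μ := by
          exact lintegral_congr hptw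
      _ = ENNReal.ofReal ((t ^ n)⁻¹) * qk n m 1 := by
          rw [lintegral_const_mul _ ((Pker_measurable1 n m 1).nnnorm.coe_nnreal_ennreal)]
          rfl
  have h0 : ENNReal.ofReal ((t ^ n)⁻¹) ≠ 0 := by
    simp [ENNReal.ofReal_eq_zero, not_le, inv_pos, htn]
  exact (ENNReal.mul_right_inj h0 ENNReal.ofReal_ne_top).1 (key.symm.trans key2)

lemma qk_lt_top (n m : ℕ) (hm : 1 ≤ m) (hn : (n:ℝ) < (n:ℝ) + 2*m - 1) :
    qk n m 1 < ∞ := by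
  have hint : Integrable (fun x : EuclideanSpace ℝ (Fin n) =>
      Bc n m * ((1:ℝ) + ‖x‖^2) ^ (-((n:ℝ) + 2*m - 1) / 2)) := by
    apply Integrable.const_mul
    apply integrable_rpow_neg_one_add_norm_sq
    rwa [finrank_euclideanSpace_fin]
  have heq : ∀ x : EuclideanSpace ℝ (Fin n), Pker n m x 1
      = Bc n m * ((1:ℝ) + ‖x‖^2) ^ (-((n:ℝ) + 2*m - 1) / 2) := by
    intro x
    rw [Pker_eq, one_pow, mul_one, one_pow, add_comm (‖x‖^2) (1:ℝ), neg_div]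
  have : qk n m 1 = ∫⁻ x : EuclideanSpace ℝ (Fin n),
      (‖Bc n m * ((1:ℝ) + ‖x‖^2) ^ (-((n:ℝ) + 2*m - 1) / 2)‖₊ : ℝ≥0∞) ∂volume := by
    apply lintegral_congr
    intro x
    rw [heq x]
  rw [this]
  exact hint.2

lemma key_bound (n m : ℕ) (hm : 1 ≤ m) (hn2 : 1 ≤ n)
    {f : EuclideanSpace ℝ (Fin n) → ℝ} (hf : Integrable f) (hfm : Measurable f)
    {lam : ℝ} (hlam : 0 < lam) (hL : 0 < ∫ y, |f y|) :
    volume {X : Pt n | 0 < X.2 ∧ lam < |Pconv n m f X|} ≤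
      (ENNReal.ofReal lam)⁻¹ * ((qk n m 1 * ENNReal.ofReal (∫ y, |f y|))
        * ENNReal.ofReal ((Bc n m * (∫ y, |f y|) / lam) ^ ((n:ℝ)⁻¹))) := by
  classical
  set L : ℝ := ∫ y, |f y| with hLdef
  set T : ℝ := (Bc n m * L / lam) ^ ((n:ℝ)⁻¹) with hTdef
  have hB := Bc_pos n m hm
  have hn0 : (0:ℝ) < (n:ℝ) := by exact_mod_cast hn2
  have hT : 0 < T := Real.rpow_pos_of_pos (by positivity) _
  set u : Pt n → ℝ := Pconv n m f with hudef
  -- measurability of u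
  have hu : StronglyMeasurable u := by
    apply MeasureTheory.StronglyMeasurable.integral_prod_right'
      (f := fun p : Pt n × (EuclideanSpace ℝ (Fin n)) => Pker n m (p.1.1 - p.2) p.1.2 * f p.2)
    exact ((Pker_measurable n m).mul (hfm.comp measurable_snd)).stronglyMeasurable
  set strip : Set (Pt n) := (Set.univ : Set (EuclideanSpace ℝ (Fin n))) ×ˢ Set.Ioc (0:ℝ) T
    with hstripdef
  have hstrip : MeasurableSet strip := MeasurableSet.univ.prod measurableSet_Ioc
  set ν : Measure (Pt n) := volume.restrict strip with hνdef
  -- inclusion into the strip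
  have hsub : {X : Pt n | 0 < X.2 ∧ lam < |u X|} ⊆ {X : Pt n | lam < |u X|} ∩ strip := by
    rintro X ⟨ht, hlt⟩
    refine ⟨hlt, Set.mem_prod.2 ⟨Set.mem_univ _, ht, ?_⟩⟩
    set t := X.2
    have h1 : lam < Bc n m * t ^ (-(n:ℝ)) * L := lt_of_lt_of_le hlt (Pconv_le n m hm hf X ht)
    have hcancel : t ^ (-(n:ℝ)) * t ^ ((n:ℝ)) = 1 := by
      rw [← Real.rpow_add ht]; simp
    have h2 : lam * t ^ ((n:ℝ)) < Bc n m * L := by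
      calc lam * t ^ ((n:ℝ)) < (Bc n m * t ^ (-(n:ℝ)) * L) * t ^ ((n:ℝ)) :=
            mul_lt_mul_of_pos_right h1 (Real.rpow_pos_of_pos ht _)
        _ = (Bc n m * L) * (t ^ (-(n:ℝ)) * t ^ ((n:ℝ))) := by ring
        _ = Bc n m * L := by rw [hcancel, mul_one]
    have h3 : t ^ ((n:ℝ)) < Bc n m * L / lam := by
      rw [lt_div_iff₀ hlam]
      linarith [h2]
    calc t = (t ^ ((n:ℝ))) ^ ((n:ℝ)⁻¹) := by
          rw [← Real.rpow_mul ht.le, mul_inv_cancel₀ hn0.ne', Real.rpow_one]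
      _ ≤ T := Real.rpow_le_rpow (Real.rpow_nonneg ht.le _) h3.le (by positivity)
  -- Chebyshev
  have hl0 : (ENNReal.ofReal lam) ≠ 0 := by simp [ENNReal.ofReal_eq_zero, not_le, hlam]
  have hcheb : volume {X : Pt n | 0 < X.2 ∧ lam < |u X|}
      ≤ (ENNReal.ofReal lam)⁻¹ * ∫⁻ X, (‖u X‖₊ : ℝ≥0∞) ∂ν := by
    have hmono1 : volume {X : Pt n | 0 < X.2 ∧ lam < |u X|}
        ≤ ν {X : Pt n | lam < |u X|} := by
      rw [hνdef, Measure.restrict_apply' hstrip]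
      exact measure_mono hsub
    have hmono2 : ν {X : Pt n | lam < |u X|}
        ≤ ν {X : Pt n | ENNReal.ofReal lam ≤ (‖u X‖₊ : ℝ≥0∞)} := by
      apply measure_mono
      intro X hX
      simp only [Set.mem_setOf_eq] at hX ⊢
      rw [← enorm_eq_nnnorm, Real.enorm_eq_ofReal_abs]
      exact ENNReal.ofReal_le_ofReal hX.le
    have hch := mul_meas_ge_le_lintegral₀
      (μ := ν) (hu.measurable.nnnorm.coe_nnreal_ennreal.aemeasurable) (ENNReal.ofReal lam)
    calc volume {X : Pt n | 0 < X.2 ∧ lam < |u X|}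
        ≤ ν {X : Pt n | ENNReal.ofReal lam ≤ (‖u X‖₊ : ℝ≥0∞)} := hmono1.trans hmono2
      _ = (ENNReal.ofReal lam)⁻¹ *
          (ENNReal.ofReal lam * ν {X : Pt n | ENNReal.ofReal lam ≤ (‖u X‖₊ : ℝ≥0∞)}) := by
          rw [← mul_assoc, ENNReal.inv_mul_cancel hl0 ENNReal.ofReal_ne_top, one_mul]
      _ ≤ (ENNReal.ofReal lam)⁻¹ * ∫⁻ X, (‖u X‖₊ : ℝ≥0∞) ∂ν := mul_le_mul_right hch _
  -- bound the lintegral of ‖u‖ by the double integral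
  set F : Pt n → ℝ≥0∞ := fun X => ∫⁻ y, (‖Pker n m (X.1 - y) X.2 * f y‖₊ : ℝ≥0∞) with hFdef
  have hFm : Measurable F :=
    Measurable.lintegral_prod_right' (((Pker_measurable n m).mul (hfm.comp measurable_snd)).nnnorm.coe_nnreal_ennreal)
  have hub : ∫⁻ X, (‖u X‖₊ : ℝ≥0∞) ∂ν ≤ ∫⁻ X, F X ∂ν := by
    apply lintegral_mono
    intro X
    exact enorm_integral_le_lintegral_enorm _
  -- compute the double integral over the strip
  set Lof : ℝ≥0∞ := ∫⁻ y, (‖f y‖₊ : ℝ≥0∞) with hLofdef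
  have hcalc : ∀ t : ℝ, 0 < t → (∫⁻ x, F (x, t)) = qk n m 1 * Lof := by
    intro t ht
    have hptw : ∀ x : EuclideanSpace ℝ (Fin n), F (x, t)
        = ∫⁻ y, (‖Pker n m (x - y) t‖₊ : ℝ≥0∞) * (‖f y‖₊ : ℝ≥0∞) := by
      intro x
      apply lintegral_congr
      intro y
      rw [nnnorm_mul, ENNReal.coe_mul]
    have hKm : Measurable (Function.uncurry fun x y : EuclideanSpace ℝ (Fin n) =>
        (‖Pker n m (x - y) t‖₊ : ℝ≥0∞) * (‖f y‖₊ : ℝ≥0∞)) := by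
      apply Measurable.fun_mul
      · exact ((Pker_measurable1 n m t).comp (measurable_fst.sub measurable_snd)).nnnorm.coe_nnreal_ennreal
      · exact (hfm.comp measurable_snd).nnnorm.coe_nnreal_ennreal
    calc (∫⁻ x, F (x, t))
        = ∫⁻ x, ∫⁻ y, (‖Pker n m (x - y) t‖₊ : ℝ≥0∞) * (‖f y‖₊ : ℝ≥0∞) := by
          exact lintegral_congr hptw
      _ = ∫⁻ y, ∫⁻ x, (‖Pker n m (x - y) t‖₊ : ℝ≥0∞) * (‖f y‖₊ : ℝ≥0∞) :=
          lintegral_lintegral_swap hKm.aemeasurable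
      _ = ∫⁻ y, (∫⁻ x, (‖Pker n m (x - y) t‖₊ : ℝ≥0∞)) * (‖f y‖₊ : ℝ≥0∞) := by
          apply lintegral_congr
          intro y
          exact lintegral_mul_const _
            (((Pker_measurable1 n m t).comp (measurable_id.sub measurable_const)).nnnorm.coe_nnreal_ennreal)
      _ = ∫⁻ y, (qk n m 1) * (‖f y‖₊ : ℝ≥0∞) := by
          apply lintegral_congr
          intro y
          congr 1
          calc ∫⁻ x, (‖Pker n m (x - y) t‖₊ : ℝ≥0∞)
              = ∫⁻ x, (‖Pker n m x t‖₊ : ℝ≥0∞) :=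
                lintegral_sub_right_eq_self (fun x : EuclideanSpace ℝ (Fin n) =>
                  (‖Pker n m x t‖₊ : ℝ≥0∞)) y
            _ = qk n m 1 := qk_eq n m hm ht
      _ = qk n m 1 * Lof := lintegral_const_mul _ hfm.nnnorm.coe_nnreal_ennreal
  have hprod : ν = (volume : Measure (EuclideanSpace ℝ (Fin n))).prod
      (volume.restrict (Set.Ioc (0:ℝ) T)) := by
    rw [hνdef, hstripdef, Measure.volume_eq_prod, ← Measure.prod_restrict, Measure.restrict_univ]
  have hdouble : ∫⁻ X, F X ∂ν ≤ (qk n m 1 * Lof) * ENNReal.ofReal T := by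
    rw [hprod, lintegral_prod_symm F hFm.aemeasurable]
    calc ∫⁻ t in Set.Ioc (0:ℝ) T, ∫⁻ x, F (x, t)
        ≤ ∫⁻ _ in Set.Ioc (0:ℝ) T, (qk n m 1 * Lof) := by
          apply lintegral_mono_ae
          refine (ae_restrict_iff' measurableSet_Ioc).2 (ae_of_all _ fun t htI => ?_)
          exact le_of_eq (hcalc t htI.1)
      _ = (qk n m 1 * Lof) * ENNReal.ofReal T := by
          rw [lintegral_const, Measure.restrict_apply_univ, Real.volume_Ioc, sub_zero]
  -- put everything together
  have hLof : Lof = ENNReal.ofReal L := by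
    rw [hLofdef, hLdef]
    simp only [← enorm_eq_nnnorm]
    rw [← ofReal_integral_norm_eq_lintegral_enorm hf]
    simp [Real.norm_eq_abs]
  calc volume {X : Pt n | 0 < X.2 ∧ lam < |u X|}
      ≤ (ENNReal.ofReal lam)⁻¹ * ∫⁻ X, (‖u X‖₊ : ℝ≥0∞) ∂ν := hcheb
    _ ≤ (ENNReal.ofReal lam)⁻¹ * ((qk n m 1 * Lof) * ENNReal.ofReal T) :=
        mul_le_mul_right (hub.trans hdouble) _
    _ = (ENNReal.ofReal lam)⁻¹ * ((qk n m 1 * ENNReal.ofReal L) * ENNReal.ofReal T) := by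
        rw [hLof]

theorem statement2 (n m : ℕ) (hm : 2 ≤ 2*m) (hmn : 2*m < n + 1) :
    ∃ c : ℝ, 0 < c ∧
      ∀ f : EuclideanSpace ℝ (Fin n) → ℝ, Integrable f →
        ∀ lam : ℝ, 0 < lam →
          volume {X : Pt n | 0 < X.2 ∧ lam < |Pconv n m f X|} ≤
            ENNReal.ofReal
              (c * lam ^ (-(((n:ℝ) + 1)/n)) * (∫ y, |f y|) ^ (((n:ℝ) + 1)/n)) := by
  have hm1 : 1 ≤ m := by omega
  have hn2 : 1 ≤ n := by omega
  have hB := Bc_pos n m hm1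
  have hn0 : (0:ℝ) < (n:ℝ) := by exact_mod_cast hn2
  have hq : qk n m 1 < ∞ := by
    apply qk_lt_top n m hm1
    have h2 : (2:ℝ) ≤ 2*(m:ℝ) := by exact_mod_cast hm
    linarith
  set a : ℝ := (qk n m 1).toReal with hadef
  have ha : 0 ≤ a := ENNReal.toReal_nonneg
  have hc0 : 0 ≤ a * (Bc n m) ^ ((n:ℝ)⁻¹) :=
    mul_nonneg ha (Real.rpow_pos_of_pos hB _).le
  refine ⟨a * (Bc n m) ^ ((n:ℝ)⁻¹) + 1, by linarith, ?_⟩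
  intro f hf lam hlam
  obtain ⟨g, hgm, hfg⟩ : ∃ g, StronglyMeasurable g ∧ f =ᵐ[volume] g :=
    ⟨hf.1.mk f, hf.1.stronglyMeasurable_mk, hf.1.ae_eq_mk⟩
  have hg : Integrable g := hf.congr hfg
  have hPeq : Pconv n m f = Pconv n m g := by
    funext X
    exact integral_congr_ae (hfg.mono fun y hy => by dsimp only; rw [hy])
  have hLeq : (∫ y, |f y|) = ∫ y, |g y| :=
    integral_congr_ae (hfg.mono fun y hy => by dsimp only; rw [hy])
  rw [hPeq, hLeq]
  set L : ℝ := ∫ y, |g y| with hLdef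
  have hL0 : 0 ≤ L := integral_nonneg fun y => abs_nonneg _
  rcases eq_or_lt_of_le hL0 with hL | hL
  · -- the case `∫ |g| = 0`
    have habs : (fun y => |g y|) =ᵐ[volume] 0 :=
      (integral_eq_zero_iff_of_nonneg (fun y => abs_nonneg _) hg.abs).1 hL.symm
    have hg0 : g =ᵐ[volume] 0 := habs.mono fun y hy => by
      simpa [abs_eq_zero] using hy
    have hu0 : ∀ X : Pt n, Pconv n m g X = 0 := by
      intro X
      apply integral_eq_zero_of_ae
      exact hg0.mono fun y hy => by simp [hy]
    have hempty : {X : Pt n | 0 < X.2 ∧ lam < |Pconv n m g X|} = ∅ := by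
      ext X
      simp only [Set.mem_setOf_eq, hu0 X, abs_zero, Set.mem_empty_iff_false, iff_false,
        not_and, not_lt]
      exact fun _ => hlam.le
    rw [hempty]
    simp only [measure_empty]
    exact zero_le
  · -- the case `∫ |g| > 0`
    have hkey := key_bound n m hm1 hn2 hg hgm.measurable hlam hL
    refine hkey.trans ?_
    have hTnn : (0:ℝ) ≤ (Bc n m * L / lam) ^ ((n:ℝ)⁻¹) :=
      Real.rpow_nonneg (by positivity) _
    have hq' : qk n m 1 = ENNReal.ofReal a := (ENNReal.ofReal_toReal hq.ne).symm
    rw [hq', ← ENNReal.ofReal_inv_of_pos hlam, ← ENNReal.ofReal_mul ha,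
      ← ENNReal.ofReal_mul (mul_nonneg ha hL0), ← ENNReal.ofReal_mul (inv_nonneg.2 hlam.le)]
    apply ENNReal.ofReal_le_ofReal
    -- now a real-number inequality
    have hTexp : (Bc n m * L / lam) ^ ((n:ℝ)⁻¹)
        = Bc n m ^ ((n:ℝ)⁻¹) * L ^ ((n:ℝ)⁻¹) * (lam ^ ((n:ℝ)⁻¹))⁻¹ := by
      rw [Real.div_rpow (by positivity) hlam.le, Real.mul_rpow hB.le hL0, div_eq_mul_inv]
    have hsplit : ((n:ℝ)+1)/n = 1 + (n:ℝ)⁻¹ := by field_simp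
    have e2 : lam ^ (-(((n:ℝ)+1)/n)) = lam⁻¹ * (lam ^ ((n:ℝ)⁻¹))⁻¹ := by
      rw [Real.rpow_neg hlam.le, hsplit, Real.rpow_add hlam, Real.rpow_one, mul_inv]
    have e3 : L ^ (((n:ℝ)+1)/n) = L * L ^ ((n:ℝ)⁻¹) := by
      rw [hsplit, Real.rpow_add hL, Real.rpow_one]
    calc lam⁻¹ * (a * L * (Bc n m * L / lam) ^ ((n:ℝ)⁻¹))
        = (a * Bc n m ^ ((n:ℝ)⁻¹)) * (lam ^ (-(((n:ℝ)+1)/n))) * (L ^ (((n:ℝ)+1)/n)) := by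
          rw [hTexp, e2, e3]; ring
      _ ≤ (a * Bc n m ^ ((n:ℝ)⁻¹) + 1) * (lam ^ (-(((n:ℝ)+1)/n))) * (L ^ (((n:ℝ)+1)/n)) := by
          have h1 : (0:ℝ) ≤ lam ^ (-(((n:ℝ)+1)/n)) := Real.rpow_nonneg hlam.le _
          have h2 : (0:ℝ) ≤ L ^ (((n:ℝ)+1)/n) := Real.rpow_nonneg hL0 _
          have h3 : a * Bc n m ^ ((n:ℝ)⁻¹) ≤ a * Bc n m ^ ((n:ℝ)⁻¹) + 1 := by linarith
          exact mul_le_mul_of_nonneg_right (mul_le_mul_of_nonneg_right h3 h1) h2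
end
end

section
/- Let m and n be integers with 2 ≤ 2m < n+1. Let f : ℝ^n → ℝ be measurable such that both f ∈ L¹(ℝ^n) and f_{0,1} ∈ L¹(ℝ^n), where f_{0,1}(x) := |x|^{2m−1−n} f(x/|x|²). Let v = P_m * f. Then for every X ∈ ℝ^{n+1}_+ one has v*(X) = (P_m * f_{0,1})(X), where v*(X) := |X|^{2m−1−n} v(X/|X|²) is the m-Kelvin transform of v with respect to the origin and radius 1. -/
open MeasureTheory Filter Asymptotics
open scoped Topology ENNReal

noncomputable section

/-- The `m`-Kelvin transform of `v` with respect to the origin and radius 1: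
`v*(X) = |X|^{2m-1-n} v(X/|X|²)`, where `|X|² = ‖x‖² + t²`. -/
def kelvinFn (n m : ℕ) (v : Pt n → ℝ) (X : Pt n) : ℝ :=
  Real.sqrt (‖X.1‖^2 + X.2^2) ^ (2*(m:ℝ) - 1 - n) * v ((‖X.1‖^2 + X.2^2)⁻¹ • X)

/-! ### Auxiliary material for the proof -/

/-- Inversion `z ↦ z/|z|²` in `ℝ^n`. -/
def inv0 (n : ℕ) (z : EuclideanSpace ℝ (Fin n)) : EuclideanSpace ℝ (Fin n) := (‖z‖^2)⁻¹ • z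

lemma norm_inv0 (n : ℕ) (z : EuclideanSpace ℝ (Fin n)) : ‖inv0 n z‖ = ‖z‖⁻¹ := by
  rcases eq_or_ne z 0 with h | h
  · simp [inv0, h]
  · have hz : ‖z‖ ≠ 0 := norm_ne_zero_iff.2 h
    rw [inv0, norm_smul, Real.norm_eq_abs, abs_of_nonneg (by positivity : (0:ℝ) ≤ (‖z‖^2)⁻¹)]
    field_simp

lemma inv0_ne (n : ℕ) {z : EuclideanSpace ℝ (Fin n)} (h : z ≠ 0) : inv0 n z ≠ 0 := by
  intro h0
  have := norm_inv0 n z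
  rw [h0, norm_zero] at this
  exact norm_ne_zero_iff.2 h (by simpa using this.symm)

lemma inv0_invol (n : ℕ) {z : EuclideanSpace ℝ (Fin n)} (h : z ≠ 0) : inv0 n (inv0 n z) = z := by
  have hz : ‖z‖ ≠ 0 := norm_ne_zero_iff.2 h
  rw [inv0, norm_inv0, inv0, smul_smul]
  have : ((‖z‖⁻¹) ^ 2)⁻¹ * (‖z‖ ^ 2)⁻¹ = 1 := by
    field_simp
  rw [this, one_smul]

lemma inv0_eq_inversion (n : ℕ) :
    inv0 n = EuclideanGeometry.inversion (0 : EuclideanSpace ℝ (Fin n)) 1 := by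
  funext z
  simp [inv0, EuclideanGeometry.inversion, dist_zero_right, one_div, inv_pow]

lemma inv0_hasFDerivAt (n : ℕ) {z : EuclideanSpace ℝ (Fin n)} (h : z ≠ 0) :
    HasFDerivAt (inv0 n)
      ((1 / ‖z‖) ^ 2 •
        ((ℝ ∙ z)ᗮ.reflection : EuclideanSpace ℝ (Fin n) →L[ℝ] EuclideanSpace ℝ (Fin n))) z := by
  rw [inv0_eq_inversion]
  have := EuclideanGeometry.hasFDerivAt_inversion (c := (0 : EuclideanSpace ℝ (Fin n))) (R := 1) h
  simpa [dist_zero_right] using this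

lemma inv0_det (n : ℕ) {z : EuclideanSpace ℝ (Fin n)} (h : z ≠ 0) :
    |(((1 / ‖z‖) ^ 2 •
        ((ℝ ∙ z)ᗮ.reflection : EuclideanSpace ℝ (Fin n) →L[ℝ] EuclideanSpace ℝ (Fin n)))).det|
      = ((‖z‖^2)⁻¹) ^ n := by
  have hz : ‖z‖ ≠ 0 := norm_ne_zero_iff.2 h
  set R := ((ℝ ∙ z)ᗮ.reflection : EuclideanSpace ℝ (Fin n) →L[ℝ] EuclideanSpace ℝ (Fin n))
  have hRR : (R : EuclideanSpace ℝ (Fin n) →ₗ[ℝ] EuclideanSpace ℝ (Fin n)) ∘ₗ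
      (R : EuclideanSpace ℝ (Fin n) →ₗ[ℝ] EuclideanSpace ℝ (Fin n)) = LinearMap.id := by
    ext v
    simp [R, Submodule.reflection_reflection]
  have hdet : LinearMap.det (R : EuclideanSpace ℝ (Fin n) →ₗ[ℝ] EuclideanSpace ℝ (Fin n)) *
      LinearMap.det (R : EuclideanSpace ℝ (Fin n) →ₗ[ℝ] EuclideanSpace ℝ (Fin n)) = 1 := by
    rw [← LinearMap.det_comp, hRR, LinearMap.det_id]
  have habs : |LinearMap.det (R : EuclideanSpace ℝ (Fin n) →ₗ[ℝ] EuclideanSpace ℝ (Fin n))| = 1 := by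
    nlinarith [abs_nonneg
        (LinearMap.det (R : EuclideanSpace ℝ (Fin n) →ₗ[ℝ] EuclideanSpace ℝ (Fin n))),
      sq_abs (LinearMap.det (R : EuclideanSpace ℝ (Fin n) →ₗ[ℝ] EuclideanSpace ℝ (Fin n)))]
  have hsmul : (((1 / ‖z‖) ^ 2 • R).det)
      = ((1 / ‖z‖) ^ 2) ^ (Module.finrank ℝ (EuclideanSpace ℝ (Fin n))) *
        LinearMap.det (R : EuclideanSpace ℝ (Fin n) →ₗ[ℝ] EuclideanSpace ℝ (Fin n)) := by
    rw [ContinuousLinearMap.det, ContinuousLinearMap.coe_smul]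
    exact LinearMap.det_smul _ _
  rw [hsmul, abs_mul, habs, mul_one, abs_pow, finrank_euclideanSpace_fin]
  congr 1
  rw [abs_of_nonneg (by positivity)]
  field_simp

lemma dist_id (n : ℕ) (x z : EuclideanSpace ℝ (Fin n)) (t : ℝ)
    (hq : ‖x‖^2 + t^2 ≠ 0) (hz : z ≠ 0) :
    ‖(‖x‖^2 + t^2)⁻¹ • x - z‖^2 + ((‖x‖^2 + t^2)⁻¹ * t)^2
      = ‖z‖^2 * (‖x‖^2 + t^2)⁻¹ * (‖x - (‖z‖^2)⁻¹ • z‖^2 + t^2) := by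
  have hb : ‖z‖ ≠ 0 := norm_ne_zero_iff.2 hz
  rw [norm_sub_sq_real, norm_sub_sq_real, real_inner_smul_left, real_inner_smul_right,
    norm_smul, norm_smul, Real.norm_eq_abs, Real.norm_eq_abs,
    abs_of_nonneg (by positivity : (0:ℝ) ≤ (‖x‖^2 + t^2)⁻¹),
    abs_of_nonneg (by positivity : (0:ℝ) ≤ (‖z‖^2)⁻¹)]
  field_simp
  ring

lemma rpow_calc (n m : ℕ) (hm : 1 ≤ m) (q b B t β : ℝ)
    (hq : 0 < q) (hb : 0 < b) (hB : 0 < B) :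
    Real.sqrt q ^ (2*(m:ℝ) - 1 - n) * (β * ((q⁻¹ * t) ^ (2*m - 1)) *
        (b^2 * q⁻¹ * B) ^ (-(((n:ℝ) + 2*m - 1)/2)))
      = ((b^2)⁻¹) ^ n * (β * t ^ (2*m - 1) * B ^ (-(((n:ℝ) + 2*m - 1)/2)) *
          b⁻¹ ^ (2*(m:ℝ) - 1 - n)) := by
  have h1 : (q⁻¹) ^ (2*m - 1) = q ^ (1 - 2*(m:ℝ)) := by
    rw [inv_pow, ← Real.rpow_natCast q (2*m - 1), ← Real.rpow_neg hq.le]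
    congr 1
    rw [Nat.cast_sub (by omega : 1 ≤ 2*m)]
    push_cast
    ring
  have h2 : Real.sqrt q ^ (2*(m:ℝ) - 1 - n) = q ^ ((2*(m:ℝ) - 1 - n)/2) := by
    rw [Real.sqrt_eq_rpow, ← Real.rpow_mul hq.le]
    congr 1
    ring
  have hb2 : ((b^2 : ℝ)) ^ (-(((n:ℝ) + 2*m - 1)/2)) = b ^ (-((n:ℝ) + 2*m - 1)) := by
    rw [← Real.rpow_natCast b 2, ← Real.rpow_mul hb.le]
    congr 1
    push_cast
    ring
  have hqi : ((q⁻¹:ℝ)) ^ (-(((n:ℝ) + 2*m - 1)/2)) = q ^ (((n:ℝ) + 2*m - 1)/2) := by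
    rw [Real.inv_rpow hq.le, ← Real.rpow_neg hq.le, neg_neg]
  have h4 : ((b^2)⁻¹ : ℝ) ^ n = b ^ (-(2*(n:ℝ))) := by
    rw [inv_pow, ← pow_mul, ← Real.rpow_natCast b (2*n), ← Real.rpow_neg hb.le]
    congr 1
    push_cast
    ring
  have h5 : (b⁻¹:ℝ) ^ (2*(m:ℝ) - 1 - n) = b ^ (-(2*(m:ℝ) - 1 - n)) := by
    rw [Real.inv_rpow hb.le, ← Real.rpow_neg hb.le]
  have hmr : (b^2 * q⁻¹ * B : ℝ) ^ (-(((n:ℝ) + 2*m - 1)/2))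
      = b ^ (-((n:ℝ) + 2*m - 1)) * q ^ (((n:ℝ) + 2*m - 1)/2) * B ^ (-(((n:ℝ) + 2*m - 1)/2)) := by
    rw [Real.mul_rpow (by positivity) hB.le, Real.mul_rpow (by positivity) (by positivity),
      hb2, hqi]
  have e2 : b ^ (-((n:ℝ) + 2*m - 1)) = b ^ (-(2*(n:ℝ))) * b ^ (-(2*(m:ℝ) - 1 - n)) := by
    rw [← Real.rpow_add hb]
    congr 1
    ring
  have e1 : q ^ ((2*(m:ℝ) - 1 - n)/2) * q ^ (1 - 2*(m:ℝ)) * q ^ (((n:ℝ) + 2*m - 1)/2) = 1 := by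
    rw [← Real.rpow_add hq, ← Real.rpow_add hq,
      show (2*(m:ℝ) - 1 - n)/2 + (1 - 2*(m:ℝ)) + ((n:ℝ) + 2*m - 1)/2 = 0 by ring,
      Real.rpow_zero]
  rw [mul_pow, h1, h2, hmr, h4, h5, e2]
  linear_combination (β * t ^ (2*m - 1) * B ^ (-(((n:ℝ) + 2*m - 1)/2)) *
    (b ^ (-(2*(n:ℝ))) * b ^ (-(2*(m:ℝ) - 1 - n)))) * e1

lemma key_kernel (n m : ℕ) (hm : 1 ≤ m) (x z : EuclideanSpace ℝ (Fin n)) (t : ℝ)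
    (ht : 0 < t) (hz : z ≠ 0) :
    Real.sqrt (‖x‖^2 + t^2) ^ (2*(m:ℝ) - 1 - n) *
      Pker n m ((‖x‖^2 + t^2)⁻¹ • x - z) ((‖x‖^2 + t^2)⁻¹ * t)
    = ((‖z‖^2)⁻¹) ^ n *
        (Pker n m (x - (‖z‖^2)⁻¹ • z) t * ‖z‖⁻¹ ^ (2*(m:ℝ) - 1 - n)) := by
  have hq : (0:ℝ) < ‖x‖^2 + t^2 := add_pos_of_nonneg_of_pos (by positivity) (pow_pos ht 2)
  have hb : (0:ℝ) < ‖z‖ := norm_pos_iff.2 hz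
  have hB : (0:ℝ) < ‖x - (‖z‖^2)⁻¹ • z‖^2 + t^2 :=
    add_pos_of_nonneg_of_pos (by positivity) (pow_pos ht 2)
  simp only [Pker]
  rw [dist_id n x z t hq.ne' hz]
  exact rpow_calc n m hm (‖x‖^2 + t^2) (‖z‖) (‖x - (‖z‖^2)⁻¹ • z‖^2 + t^2) t _ hq hb hB

/-- The derivative of `inv0` packaged as a map. -/
def Dmap (n : ℕ) (z : EuclideanSpace ℝ (Fin n)) :
    EuclideanSpace ℝ (Fin n) →L[ℝ] EuclideanSpace ℝ (Fin n) :=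
  (1 / ‖z‖) ^ 2 • ((ℝ ∙ z)ᗮ.reflection : EuclideanSpace ℝ (Fin n) →L[ℝ] EuclideanSpace ℝ (Fin n))

theorem statement5 (n m : ℕ) (hm : 2 ≤ 2*m) (hmn : 2*m < n + 1)
    (f : EuclideanSpace ℝ (Fin n) → ℝ)
    (hf : Integrable f)
    (hf01 : Integrable (fun x : EuclideanSpace ℝ (Fin n) =>
      ‖x‖ ^ (2*(m:ℝ) - 1 - n) * f ((‖x‖^2)⁻¹ • x))) :
    ∀ X : Pt n, 0 < X.2 →
      kelvinFn n m (Pconv n m f) X =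
        Pconv n m
          (fun x : EuclideanSpace ℝ (Fin n) =>
            ‖x‖ ^ (2*(m:ℝ) - 1 - n) * f ((‖x‖^2)⁻¹ • x)) X := by
  intro X hX
  have hm1 : 1 ≤ m := by omega
  have hn : 0 < n := by omega
  haveI : NeZero n := ⟨hn.ne'⟩
  set s : Set (EuclideanSpace ℝ (Fin n)) := {(0 : EuclideanSpace ℝ (Fin n))}ᶜ with hs_def
  have hs : MeasurableSet s := (measurableSet_singleton (0 : EuclideanSpace ℝ (Fin n))).compl
  have hae : s =ᵐ[(volume : Measure (EuclideanSpace ℝ (Fin n)))]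
      (Set.univ : Set (EuclideanSpace ℝ (Fin n))) := by
    rw [MeasureTheory.ae_eq_univ]
    simp [hs_def]
  have hder : ∀ z ∈ s, HasFDerivWithinAt (inv0 n) (Dmap n z) s z := fun z hz =>
    (inv0_hasFDerivAt n hz).hasFDerivWithinAt
  have hinj : Set.InjOn (inv0 n) s := fun a ha b hb hab => by
    rw [← inv0_invol n ha, hab, inv0_invol n hb]
  have himg : inv0 n '' s = s := by
    ext w
    constructor
    · rintro ⟨u, hu, rfl⟩
      exact inv0_ne n hu
    · intro hw
      exact ⟨inv0 n w, inv0_ne n hw, inv0_invol n hw⟩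
  have hL : kelvinFn n m (Pconv n m f) X
      = ∫ y : EuclideanSpace ℝ (Fin n), Real.sqrt (‖X.1‖^2 + X.2^2) ^ (2*(m:ℝ) - 1 - n) *
          (Pker n m ((‖X.1‖^2 + X.2^2)⁻¹ • X.1 - y) ((‖X.1‖^2 + X.2^2)⁻¹ * X.2) * f y) := by
    simp only [kelvinFn, Pconv, Prod.smul_fst, Prod.smul_snd, smul_eq_mul]
    rw [MeasureTheory.integral_const_mul]
  set G : EuclideanSpace ℝ (Fin n) → ℝ := fun y =>
    Pker n m (X.1 - y) X.2 * (‖y‖ ^ (2*(m:ℝ) - 1 - n) * f ((‖y‖^2)⁻¹ • y)) with hG_def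
  have hR : Pconv n m
      (fun x : EuclideanSpace ℝ (Fin n) =>
        ‖x‖ ^ (2*(m:ℝ) - 1 - n) * f ((‖x‖^2)⁻¹ • x)) X
      = ∫ y : EuclideanSpace ℝ (Fin n), G y := rfl
  rw [hL, hR]
  calc
    ∫ y : EuclideanSpace ℝ (Fin n), Real.sqrt (‖X.1‖^2 + X.2^2) ^ (2*(m:ℝ) - 1 - n) *
        (Pker n m ((‖X.1‖^2 + X.2^2)⁻¹ • X.1 - y) ((‖X.1‖^2 + X.2^2)⁻¹ * X.2) * f y)
        = ∫ y in (Set.univ : Set (EuclideanSpace ℝ (Fin n))),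
            Real.sqrt (‖X.1‖^2 + X.2^2) ^ (2*(m:ℝ) - 1 - n) *
            (Pker n m ((‖X.1‖^2 + X.2^2)⁻¹ • X.1 - y) ((‖X.1‖^2 + X.2^2)⁻¹ * X.2) * f y) := by
          rw [MeasureTheory.setIntegral_univ]
    _ = ∫ y in s, Real.sqrt (‖X.1‖^2 + X.2^2) ^ (2*(m:ℝ) - 1 - n) *
            (Pker n m ((‖X.1‖^2 + X.2^2)⁻¹ • X.1 - y) ((‖X.1‖^2 + X.2^2)⁻¹ * X.2) * f y) :=
          (MeasureTheory.setIntegral_congr_set hae).symm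
    _ = ∫ z in s, |(Dmap n z).det| • G (inv0 n z) := by
          refine MeasureTheory.setIntegral_congr_fun hs fun z hz => ?_
          have hz0 : z ≠ (0 : EuclideanSpace ℝ (Fin n)) := hz
          have h1 : ((‖inv0 n z‖^2)⁻¹ • inv0 n z) = z := inv0_invol n hz0
          have hdet : |(Dmap n z).det| = ((‖z‖^2)⁻¹) ^ n := inv0_det n hz0
          rw [smul_eq_mul, hdet]
          simp only [hG_def]
          rw [h1, norm_inv0 n z, show inv0 n z = (‖z‖^2)⁻¹ • z from rfl]
          linear_combination (f z) * key_kernel n m hm1 X.1 z X.2 hX hz0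
    _ = ∫ y in inv0 n '' s, G y :=
          (MeasureTheory.integral_image_eq_integral_abs_det_fderiv_smul volume hs hder hinj G).symm
    _ = ∫ y in s, G y := by rw [himg]
    _ = ∫ y in (Set.univ : Set (EuclideanSpace ℝ (Fin n))), G y :=
          MeasureTheory.setIntegral_congr_set hae
    _ = ∫ y : EuclideanSpace ℝ (Fin n), G y := by rw [MeasureTheory.setIntegral_univ]
end
end

section
/- Let n ≥ 4 and m ≥ 1 be integers, and let ξ ∈ C^{2m}((0,∞)). Suppose that either there exist constants c₁ > 0 and r₁ > 0 with (L^{m−1}ξ)(r) ≥ c₁ r^{1−n} for all r ∈ (0, r₁), or there exist constants c̃₁ > 0 and r̃₁ > 0 with (L^{m−1}ξ)(r) ≤ −c̃₁ r^{1−n} for all r ∈ (0, r̃₁). Then either there exist constants c_m > 0 and r_m > 0 with ξ(r) ≥ c_m r^{2m−1−n} for all r ∈ (0, r_m), or there exist constants c̃_m > 0 and r̃_m > 0 with ξ(r) ≤ −c̃_m r^{2m−1−n} for all r ∈ (0, r̃_m). -/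
open Set
open scoped Topology

noncomputable section
set_option maxHeartbeats 1000000

/-- The radial Laplace operator `L = d²/dr² + (n/r) d/dr`. -/
def Lrad (n : ℕ) (ξ : ℝ → ℝ) : ℝ → ℝ := fun r =>
  deriv (deriv ξ) r + ((n : ℝ)/r) * deriv ξ r

lemma monoIoo (f f' : ℝ → ℝ) (a b : ℝ)
    (h : ∀ x ∈ Ioo a b, HasDerivAt f (f' x) x)
    (h0 : ∀ x ∈ Ioo a b, 0 ≤ f' x) : MonotoneOn f (Ioo a b) := by
  apply monotoneOn_of_deriv_nonneg (convex_Ioo a b)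
  · exact fun x hx => (h x hx).continuousAt.continuousWithinAt
  · rw [interior_Ioo]
    exact fun x hx => (h x hx).differentiableAt.differentiableWithinAt
  · rw [interior_Ioo]
    intro x hx
    rw [(h x hx).deriv]
    exact h0 x hx

lemma L1 (f : ℝ → ℝ) (C D μ e s : ℝ) (hD : 0 < D) (hμ : μ < 0) (he : μ ≤ e) (hs : 0 < s)
    (h : ∀ r ∈ Ioo (0:ℝ) s, C + D * r ^ μ ≤ f r) :
    ∃ c : ℝ, 0 < c ∧ ∃ ρ : ℝ, 0 < ρ ∧ ∀ r ∈ Ioo (0:ℝ) ρ, c * r ^ e ≤ f r := by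
  set X : ℝ := 2 * (|C| + 1) / D with hX
  have hXpos : 0 < X := by positivity
  set t : ℝ := X ^ (1/μ) with ht
  have htpos : 0 < t := Real.rpow_pos_of_pos hXpos _
  have htμ : t ^ μ = X := by
    rw [ht, ← Real.rpow_mul hXpos.le, one_div, inv_mul_cancel₀ hμ.ne, Real.rpow_one]
  refine ⟨D/2, by positivity, min s (min 1 t), by positivity, fun r hr => ?_⟩
  obtain ⟨hr0, hrs⟩ := hr
  have hr1 : r ≤ 1 := le_of_lt (lt_of_lt_of_le hrs (le_trans (min_le_right _ _) (min_le_left _ _)))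
  have hrt : r ≤ t := le_of_lt (lt_of_lt_of_le hrs (le_trans (min_le_right _ _) (min_le_right _ _)))
  have hrS : r ∈ Ioo (0:ℝ) s := ⟨hr0, lt_of_lt_of_le hrs (min_le_left _ _)⟩
  have h1 : t ^ μ ≤ r ^ μ := Real.rpow_le_rpow_of_nonpos hr0 hrt hμ.le
  have h2 : (D/2) * (|C|+1) * 2 / D ≤ (D/2) * r ^ μ := by
    have := mul_le_mul_of_nonneg_left (htμ ▸ h1) (by positivity : (0:ℝ) ≤ D/2)
    calc (D/2) * (|C|+1) * 2 / D = (D/2) * X := by rw [hX]; field_simp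
    _ ≤ (D/2) * r ^ μ := this
  have h2' : |C| + 1 ≤ (D/2) * r ^ μ := by
    have : (D/2) * (|C|+1) * 2 / D = |C| + 1 := by field_simp
    linarith [h2, this.symm.le]
  have h3 : (D/2) * r ^ e ≤ (D/2) * r ^ μ :=
    mul_le_mul_of_nonneg_left (Real.rpow_le_rpow_of_exponent_ge hr0 hr1 he) (by positivity)
  have h4 := h r hrS
  have hCabs : -(|C|) ≤ C := neg_abs_le C
  nlinarith [h4, h2', h3]

lemma step (n : ℕ) (hn : 4 ≤ n) (α : ℝ) (hα : 1 - (n:ℝ) ≤ α)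
    (η : ℝ → ℝ)
    (hη1 : ∀ r ∈ Ioi (0:ℝ), HasDerivAt η (deriv η r) r)
    (hη2 : ∀ r ∈ Ioi (0:ℝ), HasDerivAt (deriv η) (deriv (deriv η) r) r)
    (c : ℝ) (hc : 0 < c) (ρ : ℝ) (hρ : 0 < ρ)
    (hL : ∀ r ∈ Ioo (0:ℝ) ρ, c * r ^ α ≤ Lrad n η r) :
    (∃ c' : ℝ, 0 < c' ∧ ∃ ρ' : ℝ, 0 < ρ' ∧ ∀ r ∈ Ioo (0:ℝ) ρ', c' * r ^ (α+2) ≤ η r) ∨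
    (∃ c' : ℝ, 0 < c' ∧ ∃ ρ' : ℝ, 0 < ρ' ∧ ∀ r ∈ Ioo (0:ℝ) ρ', η r ≤ -(c' * r ^ (α+2))) := by
  have hn4 : (4:ℝ) ≤ (n:ℝ) := by exact_mod_cast hn
  set β : ℝ := (n:ℝ) + α + 1 with hβdef
  have hβ2 : 2 ≤ β := by simp only [hβdef]; linarith
  have hβpos : 0 < β := by linarith
  set A : ℝ := c / β with hAdef
  have hA : 0 < A := by positivity
  set w : ℝ → ℝ := fun r => r ^ (n:ℝ) * deriv η r with hwdef
  -- derivative of w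
  have hw : ∀ r ∈ Ioo (0:ℝ) ρ, HasDerivAt w (r ^ (n:ℝ) * Lrad n η r) r := by
    intro r hr
    have hr0 : (0:ℝ) < r := hr.1
    have h1 : HasDerivAt (fun x : ℝ => x ^ (n:ℝ)) ((n:ℝ) * r ^ ((n:ℝ)-1)) r :=
      Real.hasDerivAt_rpow_const (Or.inl hr0.ne')
    have h2 := hη2 r hr0
    have : HasDerivAt (fun x : ℝ => x ^ (n:ℝ) * deriv η x)
        ((n:ℝ) * r ^ ((n:ℝ)-1) * deriv η r + r ^ (n:ℝ) * deriv (deriv η) r) r := h1.mul h2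
    convert this using 1
    rw [Lrad, Real.rpow_sub hr0, Real.rpow_one]
    field_simp
    ring
  -- W monotone
  set W : ℝ → ℝ := fun r => w r - A * r ^ β with hWdef
  have hWderiv : ∀ r ∈ Ioo (0:ℝ) ρ,
      HasDerivAt W (r ^ (n:ℝ) * Lrad n η r - A * (β * r ^ (β-1))) r := by
    intro r hr
    exact (hw r hr).sub ((Real.hasDerivAt_rpow_const (Or.inl hr.1.ne')).const_mul A)
  have hWpos : ∀ r ∈ Ioo (0:ℝ) ρ, 0 ≤ r ^ (n:ℝ) * Lrad n η r - A * (β * r ^ (β-1)) := by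
    intro r hr
    have hr0 : (0:ℝ) < r := hr.1
    have h1 : c * r ^ α ≤ Lrad n η r := hL r hr
    have h2 : r ^ (n:ℝ) * (c * r ^ α) ≤ r ^ (n:ℝ) * Lrad n η r :=
      mul_le_mul_of_nonneg_left h1 (Real.rpow_nonneg hr0.le _)
    have h3 : r ^ (n:ℝ) * (c * r ^ α) = A * (β * r ^ (β-1)) := by
      have : r ^ (β - 1) = r ^ (n:ℝ) * r ^ α := by
        rw [← Real.rpow_add hr0]; congr 1; rw [hβdef]; ring
      rw [this, hAdef]
      field_simp
    linarith [h3 ▸ h2]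
  have hWmono : MonotoneOn W (Ioo (0:ℝ) ρ) := monoIoo W _ 0 ρ hWderiv hWpos
  -- key comparison
  have hKW : ∀ s r : ℝ, s ∈ Ioo (0:ℝ) ρ → r ∈ Ioo (0:ℝ) ρ → s ≤ r →
      w s - A * s ^ β ≤ w r - A * r ^ β := fun s r hs hr hsr => hWmono hs hr hsr
  by_cases hB : ∃ r₀ ∈ Ioo (0:ℝ) ρ, w r₀ < 0
  · -- Case B: w negative somewhere ⇒ η blows up like +r^(1-n)
    obtain ⟨r₀, hr₀, hw0⟩ := hB
    set K : ℝ := w r₀ with hKdef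
    have hwle : ∀ r ∈ Ioo (0:ℝ) r₀, w r ≤ K := by
      intro r hr
      have hrρ : r ∈ Ioo (0:ℝ) ρ := ⟨hr.1, hr.2.trans hr₀.2⟩
      have := hKW r r₀ hrρ hr₀ hr.2.le
      have hrr : r ^ β ≤ r₀ ^ β := Real.rpow_le_rpow hr.1.le hr.2.le hβpos.le
      nlinarith [mul_le_mul_of_nonneg_left hrr hA.le]
    have hder : ∀ r ∈ Ioo (0:ℝ) r₀, deriv η r ≤ K * r ^ (-(n:ℝ)) := by
      intro r hr
      have hr0 : (0:ℝ) < r := hr.1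
      have hrn : (0:ℝ) < r ^ (n:ℝ) := Real.rpow_pos_of_pos hr0 _
      have h1 : r ^ (n:ℝ) * deriv η r ≤ K := hwle r hr
      have h2 : K * r ^ (-(n:ℝ)) = K / r ^ (n:ℝ) := by
        rw [Real.rpow_neg hr0.le]; ring
      rw [h2, le_div_iff₀ hrn]
      linarith [h1]
    -- V := -η - (K/(n-1)) r^(1-n) is monotone on Ioo 0 r₀
    have hn1 : (0:ℝ) < (n:ℝ) - 1 := by linarith
    set V : ℝ → ℝ := fun r => -(η r) - (K/((n:ℝ)-1)) * r ^ (1-(n:ℝ)) with hVdef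
    have hVderiv : ∀ r ∈ Ioo (0:ℝ) r₀,
        HasDerivAt V (-(deriv η r) - (K/((n:ℝ)-1)) * ((1-(n:ℝ)) * r ^ (1-(n:ℝ)-1))) r := by
      intro r hr
      exact ((hη1 r hr.1).neg).sub
        ((Real.hasDerivAt_rpow_const (Or.inl hr.1.ne')).const_mul _)
    have hVpos : ∀ r ∈ Ioo (0:ℝ) r₀,
        0 ≤ -(deriv η r) - (K/((n:ℝ)-1)) * ((1-(n:ℝ)) * r ^ (1-(n:ℝ)-1)) := by
      intro r hr
      have h1 := hder r hr
      have he : (1:ℝ)-(n:ℝ)-1 = -(n:ℝ) := by ring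
      rw [he]
      have h2 : (K/((n:ℝ)-1)) * ((1-(n:ℝ)) * r ^ (-(n:ℝ))) = -(K * r ^ (-(n:ℝ))) := by
        field_simp
        ring
      rw [h2]
      linarith
    have hVmono : MonotoneOn V (Ioo (0:ℝ) r₀) := monoIoo V _ 0 r₀ hVderiv hVpos
    set s₀ : ℝ := r₀ / 2 with hs₀def
    have hs₀ : s₀ ∈ Ioo (0:ℝ) r₀ := by
      constructor <;> (simp only [hs₀def]; linarith [hr₀.1])
    set D : ℝ := -K/((n:ℝ)-1) with hDdef
    have hD : 0 < D := by
      rw [hDdef]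
      apply div_pos (by linarith) hn1
    have hlow : ∀ r ∈ Ioo (0:ℝ) s₀, -(V s₀) + D * r ^ (1-(n:ℝ)) ≤ η r := by
      intro r hr
      have hrr : r ∈ Ioo (0:ℝ) r₀ := ⟨hr.1, hr.2.trans hs₀.2⟩
      have := hVmono hrr hs₀ hr.2.le
      rw [hVdef] at this
      simp only at this
      have hVs : V s₀ = -(η s₀) - (K/((n:ℝ)-1)) * s₀ ^ (1-(n:ℝ)) := rfl
      have hDK : D = -(K/((n:ℝ)-1)) := by rw [hDdef]; ring
      rw [hVs, hDK]
      linarith [this]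
    left
    have := L1 η (-(V s₀)) D (1-(n:ℝ)) (α+2) s₀ hD (by linarith) (by linarith) hs₀.1 hlow
    exact this
  · -- Case A: w ≥ 0 on Ioo 0 ρ ⇒ deriv η ≥ c₂ r^(α+1)
    push_neg at hB
    set c₂ : ℝ := A / 2 with hc₂def
    have hc₂ : 0 < c₂ := by positivity
    have hder : ∀ r ∈ Ioo (0:ℝ) ρ, c₂ * r ^ (α+1) ≤ deriv η r := by
      intro r hr
      have hr0 : (0:ℝ) < r := hr.1
      have hr2 : r/2 ∈ Ioo (0:ℝ) ρ := ⟨by positivity, by linarith [hr.2]⟩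
      have h0 := hB (r/2) hr2
      have h1 := hKW (r/2) r hr2 hr (by linarith)
      have hhalf : (r/2) ^ β ≤ r ^ β / 2 := by
        have e1 : (r/2) ^ β = r ^ β / 2 ^ β := Real.div_rpow hr0.le (by norm_num) β
        have e2 : (2:ℝ) ≤ 2 ^ β := by
          have := Real.rpow_le_rpow_of_exponent_le (by norm_num : (1:ℝ) ≤ 2) (by linarith : (1:ℝ) ≤ β)
          rwa [Real.rpow_one] at this
        rw [e1]
        exact div_le_div_of_nonneg_left (Real.rpow_nonneg hr0.le β) (by norm_num) e2
      have hwr : c₂ * r ^ β ≤ w r := by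
        have := mul_le_mul_of_nonneg_left hhalf hA.le
        rw [hc₂def]
        nlinarith [h0, h1]
      have hrn : (0:ℝ) < r ^ (n:ℝ) := Real.rpow_pos_of_pos hr0 _
      have hsplit : r ^ (n:ℝ) * (c₂ * r ^ (α+1)) = c₂ * r ^ β := by
        have : r ^ β = r ^ (n:ℝ) * r ^ (α+1) := by
          rw [← Real.rpow_add hr0]; congr 1; rw [hβdef]; ring
        rw [this]; ring
      have : r ^ (n:ℝ) * (c₂ * r ^ (α+1)) ≤ r ^ (n:ℝ) * deriv η r := by
        rw [hsplit]; exact hwr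
      exact (mul_le_mul_iff_right₀ hrn).mp this
    -- now integrate deriv η ≥ c₂ r^(α+1)
    rcases lt_trichotomy (α+2) 0 with hγ | hγ | hγ
    · -- α+2 < 0 : negative blow-up
      set U : ℝ → ℝ := fun r => η r - (c₂/(α+2)) * r ^ (α+2) with hUdef
      have hUderiv : ∀ r ∈ Ioo (0:ℝ) ρ,
          HasDerivAt U (deriv η r - (c₂/(α+2)) * ((α+2) * r ^ (α+2-1))) r := by
        intro r hr
        exact (hη1 r hr.1).sub ((Real.hasDerivAt_rpow_const (Or.inl hr.1.ne')).const_mul _)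
      have hUpos : ∀ r ∈ Ioo (0:ℝ) ρ,
          0 ≤ deriv η r - (c₂/(α+2)) * ((α+2) * r ^ (α+2-1)) := by
        intro r hr
        have h1 := hder r hr
        have he : α+2-1 = α+1 := by ring
        rw [he]
        have hne : α + 2 ≠ 0 := ne_of_lt hγ
        have h2 : (c₂/(α+2)) * ((α+2) * r ^ (α+1)) = c₂ * r ^ (α+1) := by
          rw [div_mul_eq_mul_div, mul_div_assoc, mul_div_cancel_left₀ _ hne]
        rw [h2]; linarith
      have hUmono : MonotoneOn U (Ioo (0:ℝ) ρ) := monoIoo U _ 0 ρ hUderiv hUpos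
      have hs₀ : ρ/2 ∈ Ioo (0:ℝ) ρ := ⟨by linarith, by linarith⟩
      have hlow : ∀ r ∈ Ioo (0:ℝ) (ρ/2),
          -(U (ρ/2)) + (-(c₂/(α+2))) * r ^ (α+2) ≤ -(η r) := by
        intro r hr
        have hrρ : r ∈ Ioo (0:ℝ) ρ := ⟨hr.1, by linarith [hr.2]⟩
        have := hUmono hrρ hs₀ hr.2.le
        have hUr : U r = η r - (c₂/(α+2)) * r ^ (α+2) := rfl
        rw [hUr] at this
        linarith
      right
      obtain ⟨c', hc', ρ', hρ', hfin⟩ :=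
        L1 (fun r => -(η r)) (-(U (ρ/2))) (-(c₂/(α+2))) (α+2) (α+2) (ρ/2)
          (neg_pos.mpr (div_neg_of_pos_of_neg hc₂ hγ)) hγ le_rfl (by linarith) hlow
      exact ⟨c', hc', ρ', hρ', fun r hr => by linarith [hfin r hr]⟩
    · -- α+2 = 0 : logarithmic blow-down
      set U : ℝ → ℝ := fun r => η r - c₂ * Real.log r with hUdef
      have hUderiv : ∀ r ∈ Ioo (0:ℝ) ρ, HasDerivAt U (deriv η r - c₂ * r⁻¹) r := by
        intro r hr
        exact (hη1 r hr.1).sub ((Real.hasDerivAt_log hr.1.ne').const_mul c₂)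
      have hUpos : ∀ r ∈ Ioo (0:ℝ) ρ, 0 ≤ deriv η r - c₂ * r⁻¹ := by
        intro r hr
        have h1 := hder r hr
        have he : α+1 = -1 := by linarith
        rw [he, Real.rpow_neg_one] at h1
        linarith
      have hUmono : MonotoneOn U (Ioo (0:ℝ) ρ) := monoIoo U _ 0 ρ hUderiv hUpos
      have hs₀ : ρ/2 ∈ Ioo (0:ℝ) ρ := ⟨by linarith, by linarith⟩
      right
      refine ⟨1, one_pos, min (ρ/2) (Real.exp (-(U (ρ/2)+1)/c₂)), by positivity, fun r hr => ?_⟩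
      have hr0 : (0:ℝ) < r := hr.1
      have hrs : r < ρ/2 := lt_of_lt_of_le hr.2 (min_le_left _ _)
      have hre : r < Real.exp (-(U (ρ/2)+1)/c₂) := lt_of_lt_of_le hr.2 (min_le_right _ _)
      have hlog : Real.log r < -(U (ρ/2)+1)/c₂ := (Real.log_lt_iff_lt_exp hr0).mpr hre
      have hrρ : r ∈ Ioo (0:ℝ) ρ := ⟨hr0, by linarith⟩
      have hmono := hUmono hrρ hs₀ hrs.le
      have hUr : U r = η r - c₂ * Real.log r := rfl
      rw [hUr] at hmono
      have h2 : c₂ * Real.log r < -(U (ρ/2)+1) := by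
        have := mul_lt_mul_of_pos_left hlog hc₂
        rwa [mul_div_cancel₀ _ hc₂.ne'] at this
      have h3 : α + 2 = 0 := hγ
      rw [h3, Real.rpow_zero]
      linarith
    · -- α+2 > 0
      set U : ℝ → ℝ := fun r => η r - (c₂/(α+2)) * r ^ (α+2) with hUdef
      have hUderiv : ∀ r ∈ Ioo (0:ℝ) ρ,
          HasDerivAt U (deriv η r - (c₂/(α+2)) * ((α+2) * r ^ (α+2-1))) r := by
        intro r hr
        exact (hη1 r hr.1).sub ((Real.hasDerivAt_rpow_const (Or.inl hr.1.ne')).const_mul _)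
      have hUpos : ∀ r ∈ Ioo (0:ℝ) ρ,
          0 ≤ deriv η r - (c₂/(α+2)) * ((α+2) * r ^ (α+2-1)) := by
        intro r hr
        have h1 := hder r hr
        have he : α+2-1 = α+1 := by ring
        rw [he]
        have hne : α + 2 ≠ 0 := ne_of_gt hγ
        have h2 : (c₂/(α+2)) * ((α+2) * r ^ (α+1)) = c₂ * r ^ (α+1) := by
          rw [div_mul_eq_mul_div, mul_div_assoc, mul_div_cancel_left₀ _ hne]
        rw [h2]; linarith
      have hUmono : MonotoneOn U (Ioo (0:ℝ) ρ) := monoIoo U _ 0 ρ hUderiv hUpos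
      have hcc : 0 < c₂/(α+2) := by positivity
      by_cases hC : ∃ r₀ ∈ Ioo (0:ℝ) (ρ/2), η r₀ < 0
      · obtain ⟨r₀, hr₀, hneg⟩ := hC
        right
        refine ⟨-(η r₀), by linarith, min r₀ 1, by
          simp only [lt_min_iff]; exact ⟨hr₀.1, one_pos⟩, fun r hr => ?_⟩
        have hr0 : (0:ℝ) < r := hr.1
        have hrr₀ : r < r₀ := lt_of_lt_of_le hr.2 (min_le_left _ _)
        have hr1 : r ≤ 1 := le_of_lt (lt_of_lt_of_le hr.2 (min_le_right _ _))
        have hrρ : r ∈ Ioo (0:ℝ) ρ := ⟨hr0, by linarith [hr₀.2]⟩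
        have hr₀ρ : r₀ ∈ Ioo (0:ℝ) ρ := ⟨hr₀.1, by linarith [hr₀.2]⟩
        have hmono := hUmono hrρ hr₀ρ hrr₀.le
        have hUr : U r = η r - (c₂/(α+2)) * r ^ (α+2) := rfl
        have hUr₀ : U r₀ = η r₀ - (c₂/(α+2)) * r₀ ^ (α+2) := rfl
        rw [hUr, hUr₀] at hmono
        have hpow : r ^ (α+2) ≤ r₀ ^ (α+2) := Real.rpow_le_rpow hr0.le hrr₀.le hγ.le
        have hle : η r ≤ η r₀ := by nlinarith [mul_le_mul_of_nonneg_left hpow hcc.le]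
        have hpow1 : r ^ (α+2) ≤ 1 := Real.rpow_le_one hr0.le hr1 hγ.le
        nlinarith [hpow1]
      · push_neg at hC
        left
        have hhalf : (0:ℝ) < (1:ℝ) - (1/2:ℝ) ^ (α+2) := by
          have : ((1:ℝ)/2) ^ (α+2) < 1 :=
            Real.rpow_lt_one (by norm_num) (by norm_num) hγ
          linarith
        refine ⟨(c₂/(α+2)) * ((1:ℝ) - (1/2:ℝ) ^ (α+2)), mul_pos hcc hhalf, ρ/2, by linarith,
          fun r hr => ?_⟩
        have hr0 : (0:ℝ) < r := hr.1
        have hr2 : r/2 ∈ Ioo (0:ℝ) (ρ/2) := ⟨by linarith, by linarith [hr.2]⟩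
        have hrρ : r ∈ Ioo (0:ℝ) ρ := ⟨hr0, by linarith [hr.2]⟩
        have hr2ρ : r/2 ∈ Ioo (0:ℝ) ρ := ⟨by linarith, by linarith [hr.2]⟩
        have hmono := hUmono hr2ρ hrρ (by linarith)
        have hUr : U r = η r - (c₂/(α+2)) * r ^ (α+2) := rfl
        have hUr2 : U (r/2) = η (r/2) - (c₂/(α+2)) * (r/2) ^ (α+2) := rfl
        rw [hUr, hUr2] at hmono
        have hη0 := hC (r/2) hr2
        have hsplit : (r/2) ^ (α+2) = r ^ (α+2) * (1/2:ℝ) ^ (α+2) := by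
          rw [show r/2 = r * (1/2:ℝ) by ring, Real.mul_rpow hr0.le (by norm_num)]
        nlinarith [hmono, hη0, hsplit]


lemma step' (n : ℕ) (hn : 4 ≤ n) (α : ℝ) (hα : 1 - (n:ℝ) ≤ α)
    (η : ℝ → ℝ)
    (hη1 : ∀ r ∈ Ioi (0:ℝ), HasDerivAt η (deriv η r) r)
    (hη2 : ∀ r ∈ Ioi (0:ℝ), HasDerivAt (deriv η) (deriv (deriv η) r) r)
    (hyp : (∃ c : ℝ, 0 < c ∧ ∃ ρ : ℝ, 0 < ρ ∧ ∀ r ∈ Ioo (0:ℝ) ρ, c * r ^ α ≤ Lrad n η r) ∨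
           (∃ c : ℝ, 0 < c ∧ ∃ ρ : ℝ, 0 < ρ ∧ ∀ r ∈ Ioo (0:ℝ) ρ, Lrad n η r ≤ -(c * r ^ α))) :
    (∃ c' : ℝ, 0 < c' ∧ ∃ ρ' : ℝ, 0 < ρ' ∧ ∀ r ∈ Ioo (0:ℝ) ρ', c' * r ^ (α+2) ≤ η r) ∨
    (∃ c' : ℝ, 0 < c' ∧ ∃ ρ' : ℝ, 0 < ρ' ∧ ∀ r ∈ Ioo (0:ℝ) ρ', η r ≤ -(c' * r ^ (α+2))) := by
  rcases hyp with ⟨c, hc, ρ, hρ, h⟩ | ⟨c, hc, ρ, hρ, h⟩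
  · rcases step n hn α hα η hη1 hη2 c hc ρ hρ h with ⟨c',hc',ρ',hρ',hf⟩ | ⟨c',hc',ρ',hρ',hf⟩
    · exact Or.inl ⟨c', hc', ρ', hρ', hf⟩
    · exact Or.inr ⟨c', hc', ρ', hρ', hf⟩
  · have hderiv_neg : deriv (fun r => -(η r)) = fun r => -(deriv η r) :=
      funext fun _ => deriv.neg
    have hd2 : deriv (fun r => -(deriv η r)) = fun r => -(deriv (deriv η) r) :=
      funext fun _ => deriv.neg
    have hη1' : ∀ r ∈ Ioi (0:ℝ), HasDerivAt (fun r => -(η r)) (deriv (fun r => -(η r)) r) r := by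
      intro r hr
      rw [hderiv_neg]
      exact (hη1 r hr).neg
    have hη2' : ∀ r ∈ Ioi (0:ℝ),
        HasDerivAt (deriv (fun r => -(η r))) (deriv (deriv (fun r => -(η r))) r) r := by
      intro r hr
      rw [hderiv_neg, hd2]
      exact (hη2 r hr).neg
    have hLneg : ∀ r, Lrad n (fun r => -(η r)) r = -(Lrad n η r) := by
      intro r
      simp only [Lrad, hderiv_neg, hd2]
      ring
    have h' : ∀ r ∈ Ioo (0:ℝ) ρ, c * r ^ α ≤ Lrad n (fun r => -(η r)) r := by
      intro r hr
      rw [hLneg]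
      linarith [h r hr]
    rcases step n hn α hα (fun r => -(η r)) hη1' hη2' c hc ρ hρ h' with
      ⟨c',hc',ρ',hρ',hf⟩ | ⟨c',hc',ρ',hρ',hf⟩
    · exact Or.inr ⟨c', hc', ρ', hρ', fun r hr => by linarith [hf r hr]⟩
    · exact Or.inl ⟨c', hc', ρ', hρ', fun r hr => by linarith [hf r hr]⟩

lemma reg1 (N : ℕ) (f : ℝ → ℝ) (hN : 2 ≤ N) (h : ContDiffOn ℝ N f (Ioi (0:ℝ))) :
    (∀ r ∈ Ioi (0:ℝ), HasDerivAt f (deriv f r) r) ∧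
    (∀ r ∈ Ioi (0:ℝ), HasDerivAt (deriv f) (deriv (deriv f) r) r) := by
  have h1 : ContDiffOn ℝ 1 (deriv f) (Ioi (0:ℝ)) :=
    h.deriv_of_isOpen isOpen_Ioi (by exact_mod_cast hN)
  constructor
  · intro r hr
    exact ((h.differentiableOn (by exact_mod_cast (by omega : N ≠ 0))).differentiableAt
      (isOpen_Ioi.mem_nhds hr)).hasDerivAt
  · intro r hr
    exact ((h1.differentiableOn one_ne_zero).differentiableAt
      (isOpen_Ioi.mem_nhds hr)).hasDerivAt

lemma reg2 (N n : ℕ) (f : ℝ → ℝ) (h : ContDiffOn ℝ (N+2 : ℕ) f (Ioi (0:ℝ))) :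
    ContDiffOn ℝ N (Lrad n f) (Ioi (0:ℝ)) := by
  have h1 : ContDiffOn ℝ (N+1 : ℕ) (deriv f) (Ioi (0:ℝ)) :=
    h.deriv_of_isOpen isOpen_Ioi (by exact_mod_cast le_refl (N+2))
  have h2 : ContDiffOn ℝ (N : ℕ) (deriv (deriv f)) (Ioi (0:ℝ)) :=
    h1.deriv_of_isOpen isOpen_Ioi (by exact_mod_cast le_refl (N+1))
  have h3 : ContDiffOn ℝ (N : ℕ) (fun r : ℝ => (n:ℝ)/r) (Ioi (0:ℝ)) :=
    ContDiffOn.div contDiffOn_const contDiffOn_id (fun x hx => ne_of_gt hx)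
  exact h2.add (h3.mul (h1.of_le (by exact_mod_cast Nat.le_succ N)))

theorem statement18 (n m : ℕ) (hn : 4 ≤ n) (hm : 1 ≤ m)
    (ξ : ℝ → ℝ) (hreg : ContDiffOn ℝ (2*m) ξ (Set.Ioi (0:ℝ)))
    (hyp :
      (∃ c₁ : ℝ, 0 < c₁ ∧ ∃ r₁ : ℝ, 0 < r₁ ∧ ∀ r ∈ Set.Ioo (0:ℝ) r₁,
        c₁ * r ^ ((1:ℝ) - n) ≤ (Lrad n)^[m-1] ξ r) ∨
      (∃ c₁ : ℝ, 0 < c₁ ∧ ∃ r₁ : ℝ, 0 < r₁ ∧ ∀ r ∈ Set.Ioo (0:ℝ) r₁,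
        (Lrad n)^[m-1] ξ r ≤ -(c₁ * r ^ ((1:ℝ) - n)))) :
    (∃ c : ℝ, 0 < c ∧ ∃ rm : ℝ, 0 < rm ∧ ∀ r ∈ Set.Ioo (0:ℝ) rm,
      c * r ^ (2*(m:ℝ) - 1 - n) ≤ ξ r) ∨
    (∃ c : ℝ, 0 < c ∧ ∃ rm : ℝ, 0 < rm ∧ ∀ r ∈ Set.Ioo (0:ℝ) rm,
      ξ r ≤ -(c * r ^ (2*(m:ℝ) - 1 - n))) := by
  induction m, hm using Nat.le_induction generalizing ξ with
  | base =>
    simp only [Nat.sub_self, Function.iterate_zero, id_eq] at hyp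
    have he : 2*((1:ℕ):ℝ) - 1 - (n:ℝ) = (1:ℝ) - n := by norm_num
    rw [he]
    exact hyp
  | succ m hm IH =>
    have hmR : (1:ℝ) ≤ (m:ℝ) := by exact_mod_cast hm
    have hnR : (4:ℝ) ≤ (n:ℝ) := by exact_mod_cast hn
    have hregL : ContDiffOn ℝ (2*m) (Lrad n ξ) (Set.Ioi (0:ℝ)) := by
      apply reg2
      have he : 2*(m+1) = 2*m+2 := by ring
      exact he ▸ hreg
    have hit : (Lrad n)^[m-1] (Lrad n ξ) = (Lrad n)^[m] ξ := by
      conv_rhs => rw [show m = (m-1)+1 from (Nat.succ_pred_eq_of_pos hm).symm]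
      rw [Function.iterate_succ_apply]
    simp only [Nat.add_sub_cancel] at hyp
    have hyp' :
      (∃ c₁ : ℝ, 0 < c₁ ∧ ∃ r₁ : ℝ, 0 < r₁ ∧ ∀ r ∈ Set.Ioo (0:ℝ) r₁,
        c₁ * r ^ ((1:ℝ) - n) ≤ (Lrad n)^[m-1] (Lrad n ξ) r) ∨
      (∃ c₁ : ℝ, 0 < c₁ ∧ ∃ r₁ : ℝ, 0 < r₁ ∧ ∀ r ∈ Set.Ioo (0:ℝ) r₁,
        (Lrad n)^[m-1] (Lrad n ξ) r ≤ -(c₁ * r ^ ((1:ℝ) - n))) := by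
      rw [hit]
      exact hyp
    have hmid := IH (Lrad n ξ) hregL hyp'
    have hreg1 := reg1 (2*(m+1)) ξ (by omega) hreg
    have hα : 1 - (n:ℝ) ≤ 2*(m:ℝ) - 1 - n := by linarith
    have hfin := step' n hn (2*(m:ℝ) - 1 - n) hα ξ hreg1.1 hreg1.2 hmid
    have he : 2*((m+1:ℕ):ℝ) - 1 - (n:ℝ) = (2*(m:ℝ) - 1 - (n:ℝ)) + 2 := by
      push_cast
      ring
    rw [he]
    exact hfin
end
end
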